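/- The map i:ℕ→ℕ defined by i(n)=⌊φn⌋+n−2 if n∈R_{1,0}, i(n)=⌊φn⌋+2 if n∈R_{3,1}, i(n)=⌊(φ−1)n⌋+2 if n∈R_{2,2}, and i(n)=⌊(φ−1)n⌋ if n∈R_{2,0}, is a well-defined bijection of ℕ onto itself whose sixth iterate is the identity, while its second and third iterates are not the identity; that is, i is a permutation of ℕ of order 6. -/

import Mathlib

/-- The golden ratio φ = (1 + √5)/2. -/
noncomputable def phi : ℝ := (1 + Real.sqrt 5) / 2

/-- The lower Wythoff sequence a(n) = ⌊nφ⌋. -/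
noncomputable def wa (n : ℕ) : ℕ := ⌊(n : ℝ) * phi⌋₊

theorem irr_phi : Irrational phi := by
  unfold phi
  have h5 : Irrational (Real.sqrt 5) := by
    simpa using (Nat.prime_five.irrational_sqrt)
  have := (h5.ratCast_add 1).div_natCast (by norm_num : (2:ℕ) ≠ 0)
  convert this using 1; push_cast; ring

theorem sqrt5_lb : (2.2 : ℝ) < Real.sqrt 5 := by
  nlinarith [Real.sq_sqrt (by norm_num : (5:ℝ) ≥ 0), Real.sqrt_nonneg 5]

theorem sqrt5_ub : Real.sqrt 5 < 2.24 := by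
  nlinarith [Real.sq_sqrt (by norm_num : (5:ℝ) ≥ 0), Real.sqrt_nonneg 5]

theorem one_lt_phi : 1 < phi := by unfold phi; nlinarith [sqrt5_lb]
theorem phi_lt_two : phi < 2 := by unfold phi; nlinarith [sqrt5_ub]
theorem phi_pos : 0 < phi := lt_trans one_pos one_lt_phi
theorem phi_sq : phi ^ 2 = phi + 1 := by
  unfold phi; have := Real.sq_sqrt (by norm_num : (5:ℝ) ≥ 0); ring_nf; nlinarith [this]

theorem phi_mul_ne (n k : ℕ) (hn : 1 ≤ n) : (n : ℝ) * phi ≠ (k : ℝ) := by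
  intro h
  have : Irrational ((n:ℝ) * phi) := by
    exact irr_phi.natCast_mul (by omega)
  exact this.ne_nat k h

-- basic bounds
theorem wa_le (n : ℕ) : (wa n : ℝ) ≤ n * phi :=
  Nat.floor_le (mul_nonneg (Nat.cast_nonneg n) phi_pos.le)

theorem wa_lt (n : ℕ) (hn : 1 ≤ n) : (wa n : ℝ) < n * phi :=
  lt_of_le_of_ne (wa_le n) (fun h => phi_mul_ne n (wa n) hn h.symm)

theorem lt_wa (n : ℕ) : (n : ℝ) * phi < wa n + 1 := Nat.lt_floor_add_one _

theorem wa_eval (k v : ℕ) (h1 : (v:ℝ) ≤ k * phi) (h2 : (k:ℝ) * phi < v + 1) : wa k = v := by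
  unfold wa
  have hnn : (0:ℝ) ≤ (k:ℝ) * phi := mul_nonneg (Nat.cast_nonneg k) phi_pos.le
  rw [Nat.floor_eq_iff hnn]
  exact ⟨h1, h2⟩

theorem n_le_wa (n : ℕ) : n ≤ wa n := by
  apply Nat.le_floor
  nlinarith [one_lt_phi, Nat.cast_nonneg (α := ℝ) n]

theorem wa_pos (n : ℕ) (hn : 1 ≤ n) : 1 ≤ wa n := le_trans hn (n_le_wa n)

theorem wa_lt_two_n (n : ℕ) (hn : 1 ≤ n) : wa n < 2 * n := by
  have h : (n : ℝ) * phi < 2 * n := by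
    have : (1:ℝ) ≤ n := by exact_mod_cast hn
    nlinarith [phi_lt_two]
  unfold wa
  rw [Nat.floor_lt (mul_nonneg (Nat.cast_nonneg n) phi_pos.le)]
  push_cast
  exact h

theorem strictMono_wa : StrictMono wa := by
  intro m n h
  have h1 : ((wa m : ℕ) : ℝ) + 1 ≤ n * phi := by
    have : ((m:ℝ) + 1) * phi ≤ n * phi := by
      have : (m : ℝ) + 1 ≤ n := by exact_mod_cast h
      nlinarith [phi_pos]
    nlinarith [one_lt_phi, wa_le m, phi_pos]
  have : wa m + 1 ≤ wa n := by
    apply Nat.le_floor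
    push_cast
    exact h1
  omega

theorem wa_inj : Function.Injective wa := strictMono_wa.injective

-- floor of (phi-1)*n
theorem id0 (n : ℕ) : ⌊(phi - 1) * (n : ℝ)⌋₊ + n = wa n := by
  have h : (phi - 1) * (n : ℝ) = (n : ℝ) * phi - n := by ring
  rw [h, show ∀ a : ℝ, ⌊a - n⌋₊ = ⌊a⌋₊ - n from fun a => by
    rw [← Int.floor_toNat, ← Int.floor_toNat, Int.floor_sub_natCast]; omega]
  have := n_le_wa n
  unfold wa at *
  omega

-- key identities
theorem id1 (n : ℕ) (hn : 1 ≤ n) : wa (wa n) + 1 = wa n + n := by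
  have h1 : (wa n : ℝ) < n * phi := wa_lt n hn
  have h2 : (n : ℝ) * phi < wa n + 1 := lt_wa n
  have hwn : 1 ≤ wa n := wa_pos n hn
  have hv : wa (wa n) = wa n + n - 1 := by
    apply wa_eval
    · have : ((wa n + n - 1 : ℕ) : ℝ) = (wa n : ℝ) + n - 1 := by
        push_cast [show 1 ≤ wa n + n by omega]; ring
      rw [this]
      nlinarith [phi_sq, one_lt_phi, phi_lt_two]
    · have : ((wa n + n - 1 : ℕ) : ℝ) + 1 = (wa n : ℝ) + n := by
        push_cast [show 1 ≤ wa n + n by omega]; ring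
      rw [this]
      nlinarith [phi_sq, one_lt_phi, phi_lt_two]
  omega

theorem id2 (n : ℕ) (hn : 1 ≤ n) : wa (wa n + n) = 2 * wa n + n := by
  have h1 : (wa n : ℝ) < n * phi := wa_lt n hn
  have h2 : (n : ℝ) * phi < wa n + 1 := lt_wa n
  apply wa_eval
  · push_cast
    nlinarith [phi_sq, one_lt_phi, phi_lt_two]
  · push_cast
    nlinarith [phi_sq, one_lt_phi, phi_lt_two]

/-- f_{i,j}(n) = F(i+1)·a(n) + F(i)·n − j. -/
noncomputable def fij (i : ℕ) (j : ℤ) (n : ℕ) : ℤ :=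
  (Nat.fib (i + 1) : ℤ) * wa n + (Nat.fib i : ℤ) * n - j

/-- R_{i,j} = { f_{i,j}(n) : n ∈ ℕ, n ≥ 1 }. -/
def R (i : ℕ) (j : ℤ) : Set ℤ := {m | ∃ n : ℕ, 0 < n ∧ fij i j n = m}

-- Beatty disjointness: a-value never equals b-value
theorem beatty_disj (m k : ℕ) (hm : 1 ≤ m) (hk : 1 ≤ k) : wa m ≠ wa k + k := by
  intro hEq
  set N := wa m with hN
  have h1 : (N : ℝ) < m * phi := wa_lt m hm
  have h2 : (m : ℝ) * phi < N + 1 := lt_wa m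
  have h3 : (k : ℝ) * phi - 1 < wa k := by
    have := lt_wa k
    linarith
  have h4 : (wa k : ℝ) < k * phi := wa_lt k hk
  have hNk : (N : ℝ) = wa k + k := by exact_mod_cast congrArg (Nat.cast (R := ℝ)) hEq
  -- N < kφ² < N+1 ; kφ² = kφ + k
  have h5 : (N : ℝ) < k * phi + k := by rw [hNk]; linarith
  have h6 : (k : ℝ) * phi + k < N + 1 := by rw [hNk]; linarith
  -- m > N(φ-1), k > N(2-φ), m < (N+1)(φ-1), k < (N+1)(2-φ)
  have hp := phi_sq
  have hl := one_lt_phi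
  have hu := phi_lt_two
  have e1 : (N : ℝ) * (phi - 1) < m := by nlinarith
  have e2 : (N : ℝ) * (2 - phi) < k := by nlinarith
  have e3 : (m : ℝ) < (N + 1) * (phi - 1) := by nlinarith
  have e4 : (k : ℝ) < (N + 1) * (2 - phi) := by nlinarith
  have f1 : (N : ℝ) < m + k := by nlinarith
  have f2 : ((m : ℝ) + k) < N + 1 := by nlinarith
  have g1 : N < m + k := by exact_mod_cast f1
  have g2 : m + k < N + 1 := by
    have : ((m + k : ℕ) : ℝ) < ((N + 1 : ℕ) : ℝ) := by push_cast; linarith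
    exact_mod_cast this
  omega

-- Beatty covering
theorem beatty_cover (N : ℕ) (hN : 1 ≤ N) :
    (∃ m, 1 ≤ m ∧ wa m = N) ∨ (∃ k, 1 ≤ k ∧ wa k + k = N) := by
  have h1 : (wa N : ℝ) < N * phi := wa_lt N hN
  have h2 : (N : ℝ) * phi < wa N + 1 := lt_wa N
  have hp := phi_sq
  have hl := one_lt_phi
  have hu := phi_lt_two
  set e : ℝ := N * phi - wa N with he
  have he0 : 0 < e := by simp [he]; linarith
  have he1 : e < 1 := by simp [he]; linarith
  have hne : e ≠ 2 - phi := by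
    intro h
    have : ((N : ℝ) + 1) * phi = (wa N : ℝ) + 2 := by
      rw [he] at h; nlinarith
    have := phi_mul_ne (N + 1) (wa N + 2) (by omega)
    push_cast at this
    exact this (by linarith)
  rcases lt_or_gt_of_ne hne with hlt | hgt
  · -- e < 2 - phi : N is a b-value, k = 2N - wa N
    right
    have hk2 : wa N < 2 * N := wa_lt_two_n N hN
    refine ⟨2 * N - wa N, by omega, ?_⟩
    have hkN : 2 * N - wa N ≤ N := by have := n_le_wa N; omega
    have hwk : wa (2 * N - wa N) = N - (2 * N - wa N) := by
      apply wa_eval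
      · push_cast [hk2.le, hkN]
        nlinarith
      · push_cast [hk2.le, hkN]
        nlinarith
    omega
  · -- e > 2 - phi : N is an a-value, m = wa N - N + 1
    left
    refine ⟨wa N + 1 - N, by have := n_le_wa N; omega, ?_⟩
    have hle : N ≤ wa N + 1 := by have := n_le_wa N; omega
    have h0 : (N:ℝ) * (phi^2 - phi - 1) = 0 := by rw [hp]; ring
    apply wa_eval
    · push_cast [hle]
      nlinarith [h0, mul_nonneg (show (0:ℝ) ≤ 1 - e by linarith) phi_pos.le]
    · push_cast [hle]
      nlinarith [h0, mul_lt_mul_of_pos_right (show (1:ℝ)-e < phi-1 by linarith) phi_pos]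

-- the five classes
noncomputable def d1 (m : ℕ) : ℕ := wa m + m
noncomputable def d2 (m : ℕ) : ℕ := wa (wa (wa m) + wa m)
noncomputable def d3 (m : ℕ) : ℕ := wa (wa (wa m))
noncomputable def d4 (m : ℕ) : ℕ := wa (wa (wa m + m))
noncomputable def d5 (m : ℕ) : ℕ := wa (wa (wa m + m) + (wa m + m))

-- value lemmas
theorem v2 (m : ℕ) (hm : 1 ≤ m) : d2 m + 2 = 3 * wa m + 2 * m := by
  unfold d2
  have h1 := id1 m hm
  have h2 := id2 (wa m) (wa_pos m hm)
  omega

theorem v3 (m : ℕ) (hm : 1 ≤ m) : d3 m + 2 = 2 * wa m + m := by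
  unfold d3
  have h1 := id1 m hm
  have h2 := id1 (wa m) (wa_pos m hm)
  omega

theorem v4 (m : ℕ) (hm : 1 ≤ m) : d4 m + 1 = 3 * wa m + 2 * m := by
  unfold d4
  have h1 := id2 m hm
  have h2 := id1 (wa m + m) (by omega)
  omega

theorem v5 (m : ℕ) (hm : 1 ≤ m) : d5 m = 5 * wa m + 3 * m := by
  unfold d5
  have h1 := id2 m hm
  have h2 := id2 (wa m + m) (by omega)
  omega

-- positivity
theorem d1_pos (m : ℕ) (hm : 1 ≤ m) : 1 ≤ d1 m := by unfold d1; omega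
theorem d2_pos (m : ℕ) (hm : 1 ≤ m) : 1 ≤ d2 m := by
  have := v2 m hm; have := wa_pos m hm; omega
theorem d3_pos (m : ℕ) (hm : 1 ≤ m) : 1 ≤ d3 m := by
  have := v3 m hm; have := wa_pos m hm; omega
theorem d4_pos (m : ℕ) (hm : 1 ≤ m) : 1 ≤ d4 m := by
  have := v4 m hm; have := wa_pos m hm; omega
theorem d5_pos (m : ℕ) (hm : 1 ≤ m) : 1 ≤ d5 m := by
  have := v5 m hm; have := wa_pos m hm; omega


theorem mem_R10 {n : ℕ} : ((n:ℤ) ∈ R 1 0) ↔ ∃ k, 0 < k ∧ wa k + k = n := by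
  unfold R fij
  simp only [show Nat.fib 2 = 1 from rfl, show Nat.fib 1 = 1 from rfl]
  constructor
  · rintro ⟨k, hk, hEq⟩; exact ⟨k, hk, by push_cast at hEq; omega⟩
  · rintro ⟨k, hk, hEq⟩; exact ⟨k, hk, by push_cast; omega⟩

theorem mem_R20 {n : ℕ} : ((n:ℤ) ∈ R 2 0) ↔ ∃ k, 0 < k ∧ 2 * wa k + k = n := by
  unfold R fij
  simp only [show Nat.fib 3 = 2 from rfl, show Nat.fib 2 = 1 from rfl]
  constructor
  · rintro ⟨k, hk, hEq⟩; exact ⟨k, hk, by push_cast at hEq; omega⟩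
  · rintro ⟨k, hk, hEq⟩; exact ⟨k, hk, by push_cast; omega⟩

theorem mem_R22 {n : ℕ} : ((n:ℤ) ∈ R 2 2) ↔ ∃ k, 0 < k ∧ 2 * wa k + k = n + 2 := by
  unfold R fij
  simp only [show Nat.fib 3 = 2 from rfl, show Nat.fib 2 = 1 from rfl]
  constructor
  · rintro ⟨k, hk, hEq⟩; exact ⟨k, hk, by push_cast at hEq; omega⟩
  · rintro ⟨k, hk, hEq⟩; exact ⟨k, hk, by push_cast; omega⟩

theorem mem_R31 {n : ℕ} : ((n:ℤ) ∈ R 3 1) ↔ ∃ k, 0 < k ∧ 3 * wa k + 2 * k = n + 1 := by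
  unfold R fij
  simp only [show Nat.fib 4 = 3 from rfl, show Nat.fib 3 = 2 from rfl]
  constructor
  · rintro ⟨k, hk, hEq⟩; exact ⟨k, hk, by push_cast at hEq; omega⟩
  · rintro ⟨k, hk, hEq⟩; exact ⟨k, hk, by push_cast; omega⟩

open scoped Classical in
/-- i(n) = ⌊φn⌋+n−2 if n ∈ R_{1,0}, ⌊φn⌋+2 if n ∈ R_{3,1}, ⌊(φ−1)n⌋+2 if n ∈ R_{2,2},
and ⌊(φ−1)n⌋ if n ∈ R_{2,0}. -/
noncomputable def imap (n : ℕ) : ℕ :=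
  if (n : ℤ) ∈ R 1 0 then wa n + n - 2
  else if (n : ℤ) ∈ R 3 1 then wa n + 2
  else if (n : ℤ) ∈ R 2 2 then ⌊(phi - 1) * (n : ℝ)⌋₊ + 2
  else ⌊(phi - 1) * (n : ℝ)⌋₊

-- generic: an a-value is never in R 1 0
theorem notR10 (j : ℕ) (hj : 1 ≤ j) : ¬ ((wa j : ℤ) ∈ R 1 0) := by
  rw [mem_R10]
  rintro ⟨k, hk, hEq⟩
  exact beatty_disj j k hj hk hEq.symm

theorem step1 (m : ℕ) (hm : 1 ≤ m) : imap (d1 m) = d2 m := by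
  have h1 : ((d1 m : ℕ) : ℤ) ∈ R 1 0 := mem_R10.mpr ⟨m, hm, rfl⟩
  unfold imap
  rw [if_pos h1]
  have hw : wa (d1 m) = 2 * wa m + m := id2 m hm
  have hv := v2 m hm
  have hp := wa_pos m hm
  unfold d1 at *
  omega

theorem step2 (m : ℕ) (hm : 1 ≤ m) : imap (d2 m) = d3 m := by
  have hA := wa_pos m hm
  have hj : 1 ≤ wa (wa m) + wa m := by omega
  have h1 : ¬ ((d2 m : ℤ) ∈ R 1 0) := notR10 _ hj
  have h2 : ¬ ((d2 m : ℤ) ∈ R 3 1) := by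
    rw [mem_R31]
    rintro ⟨k, hk, hEq⟩
    have hv4 := v4 k hk
    have hd : d4 k = d2 m := by omega
    unfold d4 d2 at hd
    have he1 : wa (wa k + k) = wa (wa m) + wa m := wa_inj hd
    exact beatty_disj (wa k + k) (wa m) (by have := wa_pos k hk; omega) hA he1
  have h3 : ¬ ((d2 m : ℤ) ∈ R 2 2) := by
    rw [mem_R22]
    rintro ⟨k, hk, hEq⟩
    have hv3 := v3 k hk
    have hd : d3 k = d2 m := by omega
    unfold d3 d2 at hd
    have he1 : wa (wa k) = wa (wa m) + wa m := wa_inj hd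
    exact beatty_disj (wa k) (wa m) (wa_pos k hk) hA he1
  unfold imap
  rw [if_neg h1, if_neg h2, if_neg h3]
  have h0 := id0 (d2 m)
  have hi : wa (d2 m) + 1 = d2 m + (wa (wa m) + wa m) := id1 _ hj
  have h1m := id1 m hm
  have h1A := id1 (wa m) hA
  unfold d2 d3 at *
  omega

theorem step3 (m : ℕ) (hm : 1 ≤ m) : imap (d3 m) = d1 m := by
  have hA := wa_pos m hm
  have hAA := wa_pos (wa m) hA
  have h1 : ¬ ((d3 m : ℤ) ∈ R 1 0) := notR10 _ hAA
  have h2 : ¬ ((d3 m : ℤ) ∈ R 3 1) := by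
    rw [mem_R31]
    rintro ⟨k, hk, hEq⟩
    have hv4 := v4 k hk
    have hd : d4 k = d3 m := by omega
    unfold d4 d3 at hd
    have he1 : wa k + k = wa m := wa_inj (wa_inj hd)
    exact beatty_disj m k hm hk he1.symm
  have h3 : ((d3 m : ℤ) ∈ R 2 2) := mem_R22.mpr ⟨m, hm, (v3 m hm).symm⟩
  unfold imap
  rw [if_neg h1, if_neg h2, if_pos h3]
  have h0 := id0 (d3 m)
  have hi : wa (d3 m) + 1 = d3 m + wa (wa m) := id1 _ hAA
  have h1m := id1 m hm
  unfold d1 d3 at *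
  omega

theorem step4 (m : ℕ) (hm : 1 ≤ m) : imap (d4 m) = d5 m := by
  have hA := wa_pos m hm
  have hb : 1 ≤ wa m + m := by omega
  have hwb := wa_pos _ hb
  have h1 : ¬ ((d4 m : ℤ) ∈ R 1 0) := notR10 _ hwb
  have h2 : ((d4 m : ℤ) ∈ R 3 1) := mem_R31.mpr ⟨m, hm, (v4 m hm).symm⟩
  unfold imap
  rw [if_neg h1, if_pos h2]
  have hi : wa (d4 m) + 1 = d4 m + wa (wa m + m) := id1 _ hwb
  have h2m := id2 m hm
  have hv4 := v4 m hm
  have hv5 := v5 m hm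
  unfold d4 at *
  omega

theorem step5 (m : ℕ) (hm : 1 ≤ m) : imap (d5 m) = d4 m := by
  have hA := wa_pos m hm
  have hb : 1 ≤ wa m + m := by omega
  have hwb := wa_pos _ hb
  have hj : 1 ≤ wa (wa m + m) + (wa m + m) := by omega
  have h1 : ¬ ((d5 m : ℤ) ∈ R 1 0) := notR10 _ hj
  have h2 : ¬ ((d5 m : ℤ) ∈ R 3 1) := by
    rw [mem_R31]
    rintro ⟨k, hk, hEq⟩
    have hv4 := v4 k hk
    have hd : d4 k = d5 m := by omega
    unfold d4 d5 at hd
    have he1 : wa (wa k + k) = wa (wa m + m) + (wa m + m) := wa_inj hd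
    exact beatty_disj (wa k + k) (wa m + m) (by have := wa_pos k hk; omega) hb he1
  have h3 : ¬ ((d5 m : ℤ) ∈ R 2 2) := by
    rw [mem_R22]
    rintro ⟨k, hk, hEq⟩
    have hv3 := v3 k hk
    have hd : d3 k = d5 m := by omega
    unfold d3 d5 at hd
    have he1 : wa (wa k) = wa (wa m + m) + (wa m + m) := wa_inj hd
    exact beatty_disj (wa k) (wa m + m) (wa_pos k hk) hb he1
  unfold imap
  rw [if_neg h1, if_neg h2, if_neg h3]
  have h0 := id0 (d5 m)
  have hi : wa (d5 m) + 1 = d5 m + (wa (wa m + m) + (wa m + m)) := id1 _ hj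
  have h2m := id2 m hm
  have hv4 := v4 m hm
  have hv5 := v5 m hm
  unfold d4 d5 at *
  omega

theorem classify (n : ℕ) (hn : 1 ≤ n) :
    ∃ m, 1 ≤ m ∧ (n = d1 m ∨ n = d2 m ∨ n = d3 m ∨ n = d4 m ∨ n = d5 m) := by
  rcases beatty_cover n hn with ⟨j, hj, hwj⟩ | ⟨j, hj, hwj⟩
  · -- n = wa j
    rcases beatty_cover j hj with ⟨i, hi, hwi⟩ | ⟨i, hi, hwi⟩
    · -- j = wa i : n = wa (wa i)
      rcases beatty_cover i hi with ⟨m, hm, hwm⟩ | ⟨m, hm, hwm⟩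
      · exact ⟨m, hm, Or.inr (Or.inr (Or.inl (by rw [← hwj, ← hwi, ← hwm]; rfl)))⟩
      · exact ⟨m, hm, Or.inr (Or.inr (Or.inr (Or.inl (by rw [← hwj, ← hwi, ← hwm]; rfl))))⟩
    · -- j = wa i + i : n = wa (wa i + i)
      rcases beatty_cover i hi with ⟨m, hm, hwm⟩ | ⟨m, hm, hwm⟩
      · exact ⟨m, hm, Or.inr (Or.inl (by rw [← hwj, ← hwi, ← hwm]; rfl))⟩
      · exact ⟨m, hm, Or.inr (Or.inr (Or.inr (Or.inr (by rw [← hwj, ← hwi, ← hwm]; rfl))))⟩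
  · exact ⟨j, hj, Or.inl (by rw [← hwj]; rfl)⟩

theorem iterate3_eq (f : ℕ → ℕ) (x : ℕ) : f^[3] x = f (f (f x)) := by
  simp [Function.iterate_succ_apply', show (3:ℕ) = 2+1 from rfl, show (2:ℕ) = 1+1 from rfl]

theorem iterate6_eq (f : ℕ → ℕ) (x : ℕ) : f^[6] x = f^[3] (f^[3] x) := by
  rw [show (6:ℕ) = 3+3 from rfl, Function.iterate_add_apply]

theorem iter3_d1 (m : ℕ) (hm : 1 ≤ m) : imap^[3] (d1 m) = d1 m := by
  rw [iterate3_eq, step1 m hm, step2 m hm, step3 m hm]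
theorem iter3_d2 (m : ℕ) (hm : 1 ≤ m) : imap^[3] (d2 m) = d2 m := by
  rw [iterate3_eq, step2 m hm, step3 m hm, step1 m hm]
theorem iter3_d3 (m : ℕ) (hm : 1 ≤ m) : imap^[3] (d3 m) = d3 m := by
  rw [iterate3_eq, step3 m hm, step1 m hm, step2 m hm]
theorem iter2_d4 (m : ℕ) (hm : 1 ≤ m) : imap (imap (d4 m)) = d4 m := by
  rw [step4 m hm, step5 m hm]
theorem iter2_d5 (m : ℕ) (hm : 1 ≤ m) : imap (imap (d5 m)) = d5 m := by
  rw [step5 m hm, step4 m hm]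

theorem iter6 (n : ℕ) (hn : 0 < n) : imap^[6] n = n := by
  obtain ⟨m, hm, hc⟩ := classify n hn
  rcases hc with h | h | h | h | h <;> subst h
  · rw [iterate6_eq, iter3_d1 m hm, iter3_d1 m hm]
  · rw [iterate6_eq, iter3_d2 m hm, iter3_d2 m hm]
  · rw [iterate6_eq, iter3_d3 m hm, iter3_d3 m hm]
  · rw [iterate6_eq, iterate3_eq, iterate3_eq, iter2_d4 m hm, step4 m hm, step5 m hm,
      iter2_d4 m hm]
  · rw [iterate6_eq, iterate3_eq, iterate3_eq, iter2_d5 m hm, step5 m hm, step4 m hm,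
      iter2_d5 m hm]

theorem imap_mapsTo : Set.MapsTo imap {n : ℕ | 0 < n} {n : ℕ | 0 < n} := by
  intro n hn
  obtain ⟨m, hm, hc⟩ := classify n hn
  rcases hc with h | h | h | h | h <;> subst h <;> simp only [Set.mem_setOf_eq]
  · rw [step1 m hm]; exact d2_pos m hm
  · rw [step2 m hm]; exact d3_pos m hm
  · rw [step3 m hm]; exact d1_pos m hm
  · rw [step4 m hm]; exact d5_pos m hm
  · rw [step5 m hm]; exact d4_pos m hm

-- numeric values
theorem wa1 : wa 1 = 1 := by
  apply wa_eval <;> push_cast <;> unfold phi <;> nlinarith [sqrt5_lb, sqrt5_ub]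
theorem wa2 : wa 2 = 3 := by
  apply wa_eval <;> push_cast <;> unfold phi <;> nlinarith [sqrt5_lb, sqrt5_ub]
theorem wa3 : wa 3 = 4 := by
  apply wa_eval <;> push_cast <;> unfold phi <;> nlinarith [sqrt5_lb, sqrt5_ub]
theorem wa5 : wa 5 = 8 := by
  apply wa_eval <;> push_cast <;> unfold phi <;> nlinarith [sqrt5_lb, sqrt5_ub]

theorem d3_1 : d3 1 = 1 := by unfold d3; rw [wa1, wa1, wa1]
theorem d1_1 : d1 1 = 2 := by unfold d1; rw [wa1]
theorem d2_1 : d2 1 = 3 := by unfold d2; rw [wa1, wa1]; exact wa2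
theorem d4_1 : d4 1 = 4 := by unfold d4; rw [wa1, wa2]; exact wa3
theorem d5_1 : d5 1 = 8 := by unfold d5; rw [wa1, wa2]; exact wa5

theorem stmt_10 :
    Set.BijOn imap {n : ℕ | 0 < n} {n : ℕ | 0 < n} ∧
    (∀ n : ℕ, 0 < n → imap^[6] n = n) ∧
    (∃ n : ℕ, 0 < n ∧ imap^[2] n ≠ n) ∧
    (∃ n : ℕ, 0 < n ∧ imap^[3] n ≠ n) := by
  refine ⟨?_, fun n hn => iter6 n hn, ?_, ?_⟩
  · have hL : Set.LeftInvOn imap^[5] imap {n : ℕ | 0 < n} := by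
      intro x hx
      rw [← Function.iterate_succ_apply]
      exact iter6 x hx
    have hR : Set.RightInvOn imap^[5] imap {n : ℕ | 0 < n} := by
      intro y hy
      have : imap (imap^[5] y) = imap^[6] y := (Function.iterate_succ_apply' imap 5 y).symm
      rw [this]
      exact iter6 y hy
    exact Set.InvOn.bijOn ⟨hL, hR⟩ imap_mapsTo (imap_mapsTo.iterate 5)
  · refine ⟨1, one_pos, ?_⟩
    have h1 : imap 1 = 2 := by
      conv_lhs => rw [← d3_1]
      rw [step3 1 le_rfl, d1_1]
    have h2 : imap 2 = 3 := by
      conv_lhs => rw [← d1_1]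
      rw [step1 1 le_rfl, d2_1]
    have : imap^[2] 1 = imap (imap 1) := by
      rw [show (2:ℕ) = 1+1 from rfl, Function.iterate_succ_apply, Function.iterate_one]
    rw [this, h1, h2]
    omega
  · refine ⟨4, by norm_num, ?_⟩
    have h1 : imap 4 = 8 := by
      conv_lhs => rw [← d4_1]
      rw [step4 1 le_rfl, d5_1]
    have h2 : imap 8 = 4 := by
      conv_lhs => rw [← d5_1]
      rw [step5 1 le_rfl, d4_1]
    rw [iterate3_eq, h1, h2, h1]
    omega
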